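/- Let t ≥ 2 be a rational number, G a minimally t-tough, claw-free graph with minimum degree δ(G) ≥ ⌈3t⌉, and A an atom of G. Then no vertex of A is contained in any 2t-vertex-cut of G. -/

import Mathlib

open SimpleGraph

variable {V : Type*}

/-- `numComponents G S` is the number of connected components of `G − S`,
the graph obtained from `G` by deleting the vertices of `S`. -/
noncomputable def numComponents (G : SimpleGraph V) (S : Set V) : ℕ :=
  Nat.card ((G.induce Sᶜ).ConnectedComponent)

/-- `HasToughness G t` says that the toughness of `G` is exactly `t`, i.e.
`t = min { |S| / w(G−S) : S ⊆ V(G), w(G−S) ≥ 2 }`.  (For a complete graph no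
such `S` exists and this predicate never holds, matching `τ(G) = ∞`.) -/
def HasToughness [Fintype V] (G : SimpleGraph V) (t : ℚ) : Prop :=
  (∀ S : Finset V, 2 ≤ numComponents G ↑S →
      t ≤ (S.card : ℚ) / (numComponents G ↑S : ℚ)) ∧
  ∃ S : Finset V, 2 ≤ numComponents G ↑S ∧
      t = (S.card : ℚ) / (numComponents G ↑S : ℚ)

/-- `G` is minimally `t`-tough: `τ(G) = t` and `τ(G − e) < t` for every edge
`e` of `G` (i.e. some vertex set witnesses a ratio `< t` in `G − e`). -/
def MinimallyTough [Fintype V] (G : SimpleGraph V) (t : ℚ) : Prop :=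
  HasToughness G t ∧
  ∀ u v : V, G.Adj u v →
    ∃ S : Finset V, 2 ≤ numComponents (G.deleteEdges {s(u, v)}) ↑S ∧
      (S.card : ℚ) / (numComponents (G.deleteEdges {s(u, v)}) ↑S : ℚ) < t

/-- `G` is claw-free: it has no induced subgraph isomorphic to `K_{1,3}`. -/
def ClawFree (G : SimpleGraph V) : Prop :=
  ¬ ∃ v a b c : V, a ≠ b ∧ a ≠ c ∧ b ≠ c ∧
      G.Adj v a ∧ G.Adj v b ∧ G.Adj v c ∧
      ¬ G.Adj a b ∧ ¬ G.Adj a c ∧ ¬ G.Adj b c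

/-- The vertex connectivity `κ(G)` of a noncomplete graph: the least cardinality
of a vertex set whose deletion disconnects `G`. -/
noncomputable def vconn [Fintype V] (G : SimpleGraph V) : ℕ :=
  sInf {k | ∃ S : Finset V, S.card = k ∧ 2 ≤ numComponents G ↑S}

/-- The vertex set of the connected component of `G − S` containing `u`
(empty if `u ∈ S`). -/
def compOf (G : SimpleGraph V) (S : Set V) (u : V) : Set V :=
  {w | ∃ (hu : u ∈ Sᶜ) (hw : w ∈ Sᶜ), (G.induce Sᶜ).Reachable ⟨u, hu⟩ ⟨w, hw⟩}

/-- `Dset G S u` is the union of the components of `G − S` other than the one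
containing `u`. -/
def Dset (G : SimpleGraph V) (S : Set V) (u : V) : Set V :=
  Sᶜ \ compOf G S u

/-- `nbrsIn G X Y = N_X(Y)`: the set of vertices in `X − Y` adjacent (in `G`)
to some vertex of `Y`. -/
def nbrsIn (G : SimpleGraph V) (X Y : Set V) : Set V :=
  {x | x ∈ X \ Y ∧ ∃ y ∈ Y, G.Adj x y}

/-- The edge `uv` is a bridge of the graph `G − S`: both endpoints survive the
deletion of `S`, they are adjacent, and deleting the edge `uv` increases the
number of connected components of `G − S`. -/
def IsBridgeIn (G : SimpleGraph V) (S : Set V) (u v : V) : Prop :=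
  u ∉ S ∧ v ∉ S ∧ G.Adj u v ∧
    numComponents G S < numComponents (G.deleteEdges {s(u, v)}) S

/-- `GoodCut G t u v S`: `S` is a vertex set with `w(G−S) ≤ |S|/t`,
`w((G−e)−S) > |S|/t` and such that `e = uv` is a bridge in `G − S`. -/
def GoodCut [Fintype V] (G : SimpleGraph V) (t : ℚ) (u v : V) (S : Finset V) : Prop :=
  (numComponents G ↑S : ℚ) ≤ (S.card : ℚ) / t ∧
  (S.card : ℚ) / t < (numComponents (G.deleteEdges {s(u, v)}) ↑S : ℚ) ∧
  IsBridgeIn G ↑S u v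

/-- `S` is a minimum-cardinality vertex set as guaranteed by Lemma 2.2,
i.e. `S = S(e)` for the edge `e = uv`. -/
def IsMinGoodCut [Fintype V] (G : SimpleGraph V) (t : ℚ) (u v : V) (S : Finset V) : Prop :=
  GoodCut G t u v S ∧ ∀ S' : Finset V, GoodCut G t u v S' → S.card ≤ S'.card

/-- `x` is contained in some `2t`-vertex-cut of `G`. -/
def InTwoTCut [Fintype V] (G : SimpleGraph V) (t : ℚ) (x : V) : Prop :=
  ∃ T : Finset V, (T.card : ℚ) = 2 * t ∧ 2 ≤ numComponents G ↑T ∧ x ∈ T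

/-- A fragment of `G`: the vertex set of a connected component of `G − T` for
some minimum vertex cut `T` of `G`. -/
def IsGraphFragment [Fintype V] (G : SimpleGraph V) (A : Set V) : Prop :=
  ∃ (T : Finset V) (a : V), T.card = vconn G ∧ 2 ≤ numComponents G ↑T ∧
    a ∉ T ∧ A = compOf G ↑T a

/-- An atom of `G`: a fragment of minimum cardinality. -/
def IsGraphAtom [Fintype V] (G : SimpleGraph V) (A : Set V) : Prop :=
  IsGraphFragment G A ∧ ∀ B : Set V, IsGraphFragment G B → A.ncard ≤ B.ncard

section Aux

variable {G : SimpleGraph V} {W X : Set V}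

lemma mem_compOf_self {u : V} (hu : u ∉ W) : u ∈ compOf G W u :=
  ⟨hu, hu, Reachable.refl _⟩

lemma compOf_subset {u : V} : compOf G W u ⊆ Wᶜ := by
  rintro w ⟨hu, hw, hr⟩; exact hw

lemma adj_mem_compOf {u p q : V} (hp : p ∈ compOf G W u) (hadj : G.Adj p q) (hq : q ∉ W) :
    q ∈ compOf G W u := by
  obtain ⟨hu, hpW, hr⟩ := hp
  exact ⟨hu, hq, hr.trans (SimpleGraph.Adj.reachable (by simpa [comap_adj] using hadj))⟩

lemma compOf_congr {u v : V} (hv : v ∈ compOf G W u) : compOf G W u = compOf G W v := by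
  obtain ⟨hu, hvW, hr⟩ := hv
  ext w
  constructor
  · rintro ⟨_, hw, hr2⟩; exact ⟨hvW, hw, hr.symm.trans hr2⟩
  · rintro ⟨_, hw, hr2⟩; exact ⟨hu, hw, hr.trans hr2⟩

lemma walk_closed (hcl : ∀ a ∈ X, ∀ b, G.Adj a b → b ∈ X ∪ W) :
    ∀ {u v : ↥Wᶜ}, (G.induce Wᶜ).Walk u v → (u : V) ∈ X → (v : V) ∈ X := by
  intro u v p
  induction p with
  | nil => exact id
  | @cons a b c h p ih =>
    intro ha
    have hb : (b : V) ∈ X ∪ W := hcl a ha b (by simpa [comap_adj] using h)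
    rcases hb with hb | hb
    · exact ih hb
    · exact absurd hb b.2

lemma compOf_subset_closed (_hdis : ∀ p ∈ X, p ∉ W)
    (hcl : ∀ a ∈ X, ∀ b, G.Adj a b → b ∈ X ∪ W) {x : V} (hx : x ∈ X) :
    compOf G W x ⊆ X := by
  rintro w ⟨hu, hw, hr⟩
  obtain ⟨p⟩ := hr
  exact walk_closed hcl p hx

lemma two_le_numComponents_of [Fintype V] {x y : V}
    (hx : x ∈ Wᶜ) (hy : y ∈ Wᶜ) (h : ¬ (G.induce Wᶜ).Reachable ⟨x, hx⟩ ⟨y, hy⟩) :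
    2 ≤ numComponents G W := by
  have hnt : Nontrivial ((G.induce Wᶜ).ConnectedComponent) :=
    ⟨(G.induce Wᶜ).connectedComponentMk ⟨x, hx⟩, (G.induce Wᶜ).connectedComponentMk ⟨y, hy⟩,
      fun hc => h (ConnectedComponent.eq.1 hc)⟩
  exact Finite.one_lt_card_iff_nontrivial.2 hnt

lemma exists_sep_pair [Fintype V] (h : 2 ≤ numComponents G W) :
    ∃ x y : V, ∃ (hx : x ∈ Wᶜ) (hy : y ∈ Wᶜ),
      ¬ (G.induce Wᶜ).Reachable ⟨x, hx⟩ ⟨y, hy⟩ := by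
  have hnt : Nontrivial ((G.induce Wᶜ).ConnectedComponent) :=
    Finite.one_lt_card_iff_nontrivial.1 h
  obtain ⟨c, d, hcd⟩ := hnt
  obtain ⟨⟨x, hx⟩, rfl⟩ := c.exists_rep
  obtain ⟨⟨y, hy⟩, rfl⟩ := d.exists_rep
  exact ⟨x, y, hx, hy, fun hr => hcd (ConnectedComponent.eq.2 hr)⟩

lemma cut_of_closed [Fintype V] (hdis : ∀ p ∈ X, p ∉ W)
    (hcl : ∀ a ∈ X, ∀ b, G.Adj a b → b ∈ X ∪ W)
    {x y : V} (hx : x ∈ X) (hyX : y ∉ X) (hyW : y ∉ W) : 2 ≤ numComponents G W := by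
  refine two_le_numComponents_of (hdis x hx) hyW ?_
  intro hr
  obtain ⟨p⟩ := hr
  exact hyX (walk_closed hcl p hx)

lemma ncard_tripart [Fintype V] (Z W' F : Set V) (hF : F ⊆ W'ᶜ) :
    Z.ncard = (Z ∩ F).ncard + (Z ∩ W').ncard + (Z ∩ (W'ᶜ \ F)).ncard := by
  have h1 : Z = ((Z ∩ F) ∪ (Z ∩ W')) ∪ (Z ∩ (W'ᶜ \ F)) := by
    ext z
    simp only [Set.mem_union, Set.mem_inter_iff, Set.mem_diff, Set.mem_compl_iff]
    constructor
    · intro hz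
      by_cases hW : z ∈ W'
      · exact Or.inl (Or.inr ⟨hz, hW⟩)
      · by_cases hFz : z ∈ F
        · exact Or.inl (Or.inl ⟨hz, hFz⟩)
        · exact Or.inr ⟨hz, hW, hFz⟩
    · rintro ((⟨hz, _⟩ | ⟨hz, _⟩) | ⟨hz, _⟩) <;> exact hz
  have d1 : Disjoint (Z ∩ F) (Z ∩ W') :=
    Set.disjoint_left.2 fun z hz1 hz2 => hF hz1.2 hz2.2
  have d2 : Disjoint ((Z ∩ F) ∪ (Z ∩ W')) (Z ∩ (W'ᶜ \ F)) := by
    refine Set.disjoint_left.2 fun z hz1 hz2 => ?_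
    rcases hz1 with hz1 | hz1
    · exact hz2.2.2 hz1.2
    · exact hz2.2.1 hz1.2
  conv_lhs => rw [h1]
  rw [Set.ncard_union_eq d2 (Set.toFinite _) (Set.toFinite _),
    Set.ncard_union_eq d1 (Set.toFinite _) (Set.toFinite _)]

end Aux

/-- Let `t ≥ 2`, `G` a minimally `t`-tough, claw-free graph with
`δ(G) ≥ ⌈3t⌉`, and `A` an atom of `G`.  Then no vertex of `A` is contained in
any `2t`-vertex-cut of `G`. -/
theorem atom_avoids_2t_cuts [Fintype V] (G : SimpleGraph V) [DecidableRel G.Adj]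
    (t : ℚ) (ht : 2 ≤ t) (hmt : MinimallyTough G t) (hcf : ClawFree G)
    (hδ : ∀ v : V, ⌈3 * t⌉ ≤ (G.degree v : ℤ))
    (A : Set V) (hA : IsGraphAtom G A) :
    ∀ x ∈ A, ¬ InTwoTCut G t x := by
  classical
  intro x hxA hcut
  obtain ⟨T, hTcard, hTcomp, hxT⟩ := hcut
  obtain ⟨⟨htough, -⟩, -⟩ := hmt
  obtain ⟨hfrag, hminA⟩ := hA
  obtain ⟨S, a0, hScard, hScomp, ha0S, hAeq⟩ := hfrag
  set k := vconn G with hkdef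
  -- every vertex cut has at least 2t vertices
  have hcutlb : ∀ S' : Finset V, 2 ≤ numComponents G ↑S' → 2 * t ≤ (S'.card : ℚ) := by
    intro S' h2
    have h := htough S' h2
    have hw : (2 : ℚ) ≤ (numComponents G ↑S' : ℚ) := by exact_mod_cast h2
    have hpos : (0 : ℚ) < (numComponents G ↑S' : ℚ) := by linarith
    rw [le_div_iff₀ hpos] at h
    nlinarith
  have hTmem : T.card ∈ {n | ∃ S' : Finset V, S'.card = n ∧ 2 ≤ numComponents G ↑S'} :=
    ⟨T, rfl, hTcomp⟩
  have hkleT : k ≤ T.card := Nat.sInf_le hTmem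
  have hkmem : ∃ S' : Finset V, S'.card = k ∧ 2 ≤ numComponents G ↑S' :=
    Nat.sInf_mem (Set.nonempty_of_mem hTmem)
  obtain ⟨S0, hS0card, hS0comp⟩ := hkmem
  have hk2t : (k : ℚ) = 2 * t := by
    have h1 : (k : ℚ) ≤ 2 * t := by
      rw [← hTcard]; exact_mod_cast hkleT
    have h2 := hcutlb S0 hS0comp
    rw [hS0card] at h2
    linarith
  have hTk : T.card = k := by
    have : (T.card : ℚ) = (k : ℚ) := by rw [hTcard, hk2t]
    exact_mod_cast this
  have hScard' : S.card = k := hScard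
  -- basic facts about the atom A
  have hASub : A ⊆ (↑S : Set V)ᶜ := by rw [hAeq]; exact compOf_subset
  have hAcl : ∀ p ∈ A, ∀ q, G.Adj p q → q ∈ A ∪ ↑S := by
    intro p hp q hadj
    by_cases hq : q ∈ (↑S : Set V)
    · exact Or.inr hq
    · left
      rw [hAeq] at hp ⊢
      exact adj_mem_compOf hp hadj hq
  set Ab := (↑S : Set V)ᶜ \ A with hAbdef
  have hAbcl : ∀ p ∈ Ab, ∀ q, G.Adj p q → q ∈ Ab ∪ ↑S := by
    intro p hp q hadj
    by_cases hq : q ∈ (↑S : Set V)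
    · exact Or.inr hq
    · left
      refine ⟨hq, fun hqA => ?_⟩
      rcases hAcl q hqA p hadj.symm with h | h
      · exact hp.2 h
      · exact hp.1 h
  -- the other side: two components of G - T
  obtain ⟨u, v, huT, hvT, hnr⟩ := exists_sep_pair hTcomp
  set F := compOf G ↑T u with hFdef
  have huF : u ∈ F := mem_compOf_self huT
  have hFsub : F ⊆ (↑T : Set V)ᶜ := compOf_subset
  have hvF : v ∉ F := by
    rintro ⟨_, _, hr⟩
    exact hnr hr
  set Fb := (↑T : Set V)ᶜ \ F with hFbdef
  have hvFb : v ∈ Fb := ⟨hvT, hvF⟩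
  have hFcl : ∀ p ∈ F, ∀ q, G.Adj p q → q ∈ F ∪ ↑T := by
    intro p hp q hadj
    by_cases hq : q ∈ (↑T : Set V)
    · exact Or.inr hq
    · left
      rw [hFdef] at hp ⊢
      exact adj_mem_compOf hp hadj hq
  have hFbcl : ∀ p ∈ Fb, ∀ q, G.Adj p q → q ∈ Fb ∪ ↑T := by
    intro p hp q hadj
    by_cases hq : q ∈ (↑T : Set V)
    · exact Or.inr hq
    · left
      refine ⟨hq, fun hqF => ?_⟩
      rcases hFcl q hqF p hadj.symm with h | h
      · exact hp.2 h
      · exact hp.1 h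
  set m := A.ncard with hmdef
  -- fragments have size at least m
  have hfragsize : ∀ (W' : Finset V) (w : V), W'.card = k → 2 ≤ numComponents G ↑W' →
      w ∉ (↑W' : Set V) → m ≤ (compOf G ↑W' w).ncard := by
    intro W' w hc h2 hw
    exact hminA _ ⟨W', w, hc, h2, fun hh => hw hh, rfl⟩
  have hmF : m ≤ F.ncard := hfragsize T u hTk hTcomp huT
  have hmFb : m ≤ Fb.ncard := by
    have hsub : compOf G ↑T v ⊆ Fb := by
      intro z hz
      refine ⟨compOf_subset hz, fun hzF => hvF ?_⟩
      have e1 := compOf_congr hz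
      have e2 := compOf_congr (hFdef ▸ hzF)
      have hv : v ∈ compOf G ↑T v := mem_compOf_self hvT
      rw [e1, ← e2] at hv
      exact hFdef ▸ hv
    exact le_trans (hfragsize T v hTk hTcomp hvT) (Set.ncard_le_ncard hsub (Set.toFinite _))
  have hmAb : m ≤ Ab.ncard := by
    obtain ⟨u0, v0, hu0, hv0, hnr0⟩ := exists_sep_pair hScomp
    obtain ⟨w0, hw0S, hw0A⟩ : ∃ w0, w0 ∈ (↑S : Set V)ᶜ ∧ w0 ∉ A := by
      by_cases hu0A : u0 ∈ A
      · refine ⟨v0, hv0, fun hv0A => hnr0 ?_⟩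
        rw [hAeq] at hu0A hv0A
        have e1 := compOf_congr hu0A
        rw [e1] at hv0A
        obtain ⟨_, _, hr⟩ := hv0A
        exact hr
      · exact ⟨u0, hu0, hu0A⟩
    have hsub : compOf G ↑S w0 ⊆ Ab := by
      intro z hz
      refine ⟨compOf_subset hz, fun hzA => hw0A ?_⟩
      have e1 := compOf_congr hz
      have e2 := compOf_congr (hAeq ▸ hzA : z ∈ compOf G ↑S a0)
      rw [hAeq, e2, ← e1]
      exact mem_compOf_self hw0S
    exact le_trans (hfragsize S w0 hScard' hScomp hw0S) (Set.ncard_le_ncard hsub (Set.toFinite _))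
  -- the nine cells
  set a1 := (A ∩ F).ncard with ha1def
  set a2 := (A ∩ ↑T).ncard with ha2def
  set a3 := (A ∩ Fb).ncard with ha3def
  set s1 := ((↑S : Set V) ∩ F).ncard with hs1def
  set s2 := ((↑S : Set V) ∩ ↑T).ncard with hs2def
  set s3 := ((↑S : Set V) ∩ Fb).ncard with hs3def
  set b1 := (Ab ∩ F).ncard with hb1def
  set b2 := (Ab ∩ ↑T).ncard with hb2def
  set b3 := (Ab ∩ Fb).ncard with hb3def
  have ha2pos : 1 ≤ a2 := by
    rw [ha2def]
    exact (Set.ncard_pos (Set.toFinite _)).2 ⟨x, hxA, hxT⟩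
  -- partition identities
  have hmsum : m = a1 + a2 + a3 := by
    have h := ncard_tripart A (↑T) F hFsub
    rw [← hFbdef] at h
    rw [hmdef, h, ha1def, ha2def, ha3def]
  have hssum : k = s1 + s2 + s3 := by
    have h := ncard_tripart (↑S) (↑T) F hFsub
    rw [← hFbdef, Set.ncard_coe_finset, hScard'] at h
    rw [h, hs1def, hs2def, hs3def]
  have htsum : k = a2 + s2 + b2 := by
    have h := ncard_tripart (↑T) (↑S) A hASub
    rw [← hAbdef, Set.ncard_coe_finset, hTk] at h
    rw [h, ha2def, hs2def, hb2def, Set.inter_comm A, Set.inter_comm ((↑S : Set V)) (↑T),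
      Set.inter_comm Ab]
  have hFsum : F.ncard = a1 + s1 + b1 := by
    have h := ncard_tripart F (↑S) A hASub
    rw [← hAbdef] at h
    rw [h, ha1def, hs1def, hb1def, Set.inter_comm A, Set.inter_comm ((↑S : Set V)),
      Set.inter_comm Ab]
  have hFbsum : Fb.ncard = a3 + s3 + b3 := by
    have h := ncard_tripart Fb (↑S) A hASub
    rw [← hAbdef] at h
    rw [h, ha3def, hs3def, hb3def, Set.inter_comm A, Set.inter_comm ((↑S : Set V)),
      Set.inter_comm Ab]
  have hAbsum : Ab.ncard = b1 + b2 + b3 := by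
    have h := ncard_tripart Ab (↑T) F hFsub
    rw [← hFbdef] at h
    rw [h, hb1def, hb2def, hb3def]
  have hmF' : m ≤ a1 + s1 + b1 := hFsum ▸ hmF
  have hmFb' : m ≤ a3 + s3 + b3 := hFbsum ▸ hmFb
  have hmAb' : m ≤ b1 + b2 + b3 := hAbsum ▸ hmAb
  -- cut lower bounds
  have cutLB : ∀ Y X' : Set V, (∀ p ∈ X', p ∉ Y) → (∀ p ∈ X', ∀ q, G.Adj p q → q ∈ X' ∪ Y) →
      ∀ x1 ∈ X', ∀ y1, y1 ∉ X' → y1 ∉ Y → k ≤ Y.ncard := by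
    intro Y X' hd hc x1 hx1 y1 hy1X hy1Y
    have h2 : 2 ≤ numComponents G Y := cut_of_closed hd hc hx1 hy1X hy1Y
    have h2' : 2 ≤ numComponents G ↑((Set.toFinite Y).toFinset) := by
      rwa [Set.Finite.coe_toFinset]
    have hmem : ((Set.toFinite Y).toFinset).card ∈
        {n | ∃ S' : Finset V, S'.card = n ∧ 2 ≤ numComponents G ↑S'} :=
      ⟨(Set.toFinite Y).toFinset, rfl, h2'⟩
    have hle : k ≤ ((Set.toFinite Y).toFinset).card := Nat.sInf_le hmem
    rwa [← Set.ncard_eq_toFinset_card Y (Set.toFinite Y)] at hle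
  have cutLB' : ∀ Y X' : Set V, (∀ p ∈ X', p ∉ Y) → (∀ p ∈ X', ∀ q, G.Adj p q → q ∈ X' ∪ Y) →
      ∀ x1 ∈ X', ∀ y1, y1 ∉ X' → y1 ∉ Y → X'.ncard < m → k + 1 ≤ Y.ncard := by
    intro Y X' hd hc x1 hx1 y1 hy1X hy1Y hsmall
    have hge := cutLB Y X' hd hc x1 hx1 y1 hy1X hy1Y
    rcases lt_or_eq_of_le hge with h | h
    · omega
    · exfalso
      have h2 : 2 ≤ numComponents G Y := cut_of_closed hd hc hx1 hy1X hy1Y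
      have h2' : 2 ≤ numComponents G ↑((Set.toFinite Y).toFinset) := by
        rwa [Set.Finite.coe_toFinset]
      have hcard : ((Set.toFinite Y).toFinset).card = k := by
        rw [← Set.ncard_eq_toFinset_card Y (Set.toFinite Y), ← h]
      have hx1Y : x1 ∉ (↑((Set.toFinite Y).toFinset) : Set V) := by
        rw [Set.Finite.coe_toFinset]; exact hd x1 hx1
      have hfs := hfragsize _ x1 hcard h2' hx1Y
      rw [Set.Finite.coe_toFinset] at hfs
      have hsub := compOf_subset_closed hd hc hx1
      have hle2 := Set.ncard_le_ncard hsub (Set.toFinite _)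
      omega
  -- the four corner-cut inequalities
  have h5 : a1 = 0 ∨ k + 1 ≤ s1 + s2 + a2 := by
    rcases Set.eq_empty_or_nonempty (A ∩ F) with he | ⟨x1, hx1⟩
    · left; rw [ha1def, he, Set.ncard_empty]
    · right
      have hYcard : ((↑S : Set V) ∩ F ∪ (↑S : Set V) ∩ ↑T ∪ A ∩ ↑T).ncard = s1 + s2 + a2 := by
        have d1 : Disjoint ((↑S : Set V) ∩ F) ((↑S : Set V) ∩ ↑T) :=
          Set.disjoint_left.2 fun z h1 h2 => hFsub h1.2 h2.2
        have d2 : Disjoint ((↑S : Set V) ∩ F ∪ (↑S : Set V) ∩ ↑T) (A ∩ ↑T) := by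
          refine Set.disjoint_left.2 fun z h1 h2 => ?_
          rcases h1 with h1 | h1 <;> exact hASub h2.1 h1.1
        rw [Set.ncard_union_eq d2 (Set.toFinite _) (Set.toFinite _),
          Set.ncard_union_eq d1 (Set.toFinite _) (Set.toFinite _), hs1def, hs2def, ha2def]
      rw [← hYcard]
      refine cutLB' _ (A ∩ F) ?_ ?_ x1 hx1 v ?_ ?_ ?_
      · rintro p ⟨hpA, hpF⟩ ((h | h) | h)
        · exact hASub hpA h.1
        · exact hASub hpA h.1
        · exact hFsub hpF h.2
      · intro p hp q hadj
        rcases hAcl p hp.1 q hadj with h1 | h1 <;> rcases hFcl p hp.2 q hadj with h2 | h2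
        · exact Or.inl ⟨h1, h2⟩
        · exact Or.inr (Or.inr ⟨h1, h2⟩)
        · exact Or.inr (Or.inl (Or.inl ⟨h1, h2⟩))
        · exact Or.inr (Or.inl (Or.inr ⟨h1, h2⟩))
      · exact fun h => hvF h.2
      · rintro ((h | h) | h)
        · exact hvF h.2
        · exact hvT h.2
        · exact hvT h.2
      · rw [← ha1def]; omega
  have h6 : a3 = 0 ∨ k + 1 ≤ s3 + s2 + a2 := by
    rcases Set.eq_empty_or_nonempty (A ∩ Fb) with he | ⟨x1, hx1⟩
    · left; rw [ha3def, he, Set.ncard_empty]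
    · right
      have hYcard : ((↑S : Set V) ∩ Fb ∪ (↑S : Set V) ∩ ↑T ∪ A ∩ ↑T).ncard = s3 + s2 + a2 := by
        have d1 : Disjoint ((↑S : Set V) ∩ Fb) ((↑S : Set V) ∩ ↑T) :=
          Set.disjoint_left.2 fun z h1 h2 => h1.2.1 h2.2
        have d2 : Disjoint ((↑S : Set V) ∩ Fb ∪ (↑S : Set V) ∩ ↑T) (A ∩ ↑T) := by
          refine Set.disjoint_left.2 fun z h1 h2 => ?_
          rcases h1 with h1 | h1 <;> exact hASub h2.1 h1.1
        rw [Set.ncard_union_eq d2 (Set.toFinite _) (Set.toFinite _),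
          Set.ncard_union_eq d1 (Set.toFinite _) (Set.toFinite _), hs3def, hs2def, ha2def]
      rw [← hYcard]
      refine cutLB' _ (A ∩ Fb) ?_ ?_ x1 hx1 u ?_ ?_ ?_
      · rintro p ⟨hpA, hpF⟩ ((h | h) | h)
        · exact hASub hpA h.1
        · exact hASub hpA h.1
        · exact hpF.1 h.2
      · intro p hp q hadj
        rcases hAcl p hp.1 q hadj with h1 | h1 <;> rcases hFbcl p hp.2 q hadj with h2 | h2
        · exact Or.inl ⟨h1, h2⟩
        · exact Or.inr (Or.inr ⟨h1, h2⟩)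
        · exact Or.inr (Or.inl (Or.inl ⟨h1, h2⟩))
        · exact Or.inr (Or.inl (Or.inr ⟨h1, h2⟩))
      · exact fun h => h.2.2 huF
      · rintro ((h | h) | h)
        · exact h.2.2 huF
        · exact huT h.2
        · exact huT h.2
      · rw [← ha3def]; omega
  have h7 : b1 = 0 ∨ k ≤ s1 + s2 + b2 := by
    rcases Set.eq_empty_or_nonempty (Ab ∩ F) with he | ⟨x1, hx1⟩
    · left; rw [hb1def, he, Set.ncard_empty]
    · right
      have hYcard : ((↑S : Set V) ∩ F ∪ (↑S : Set V) ∩ ↑T ∪ Ab ∩ ↑T).ncard = s1 + s2 + b2 := by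
        have d1 : Disjoint ((↑S : Set V) ∩ F) ((↑S : Set V) ∩ ↑T) :=
          Set.disjoint_left.2 fun z h1 h2 => hFsub h1.2 h2.2
        have d2 : Disjoint ((↑S : Set V) ∩ F ∪ (↑S : Set V) ∩ ↑T) (Ab ∩ ↑T) := by
          refine Set.disjoint_left.2 fun z h1 h2 => ?_
          rcases h1 with h1 | h1 <;> exact h2.1.1 h1.1
        rw [Set.ncard_union_eq d2 (Set.toFinite _) (Set.toFinite _),
          Set.ncard_union_eq d1 (Set.toFinite _) (Set.toFinite _), hs1def, hs2def, hb2def]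
      rw [← hYcard]
      refine cutLB _ (Ab ∩ F) ?_ ?_ x1 hx1 v ?_ ?_
      · rintro p ⟨hpA, hpF⟩ ((h | h) | h)
        · exact hpA.1 h.1
        · exact hpA.1 h.1
        · exact hFsub hpF h.2
      · intro p hp q hadj
        rcases hAbcl p hp.1 q hadj with h1 | h1 <;> rcases hFcl p hp.2 q hadj with h2 | h2
        · exact Or.inl ⟨h1, h2⟩
        · exact Or.inr (Or.inr ⟨h1, h2⟩)
        · exact Or.inr (Or.inl (Or.inl ⟨h1, h2⟩))
        · exact Or.inr (Or.inl (Or.inr ⟨h1, h2⟩))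
      · exact fun h => hvF h.2
      · rintro ((h | h) | h)
        · exact hvF h.2
        · exact hvT h.2
        · exact hvT h.2
  have h8 : b3 = 0 ∨ k ≤ s3 + s2 + b2 := by
    rcases Set.eq_empty_or_nonempty (Ab ∩ Fb) with he | ⟨x1, hx1⟩
    · left; rw [hb3def, he, Set.ncard_empty]
    · right
      have hYcard : ((↑S : Set V) ∩ Fb ∪ (↑S : Set V) ∩ ↑T ∪ Ab ∩ ↑T).ncard = s3 + s2 + b2 := by
        have d1 : Disjoint ((↑S : Set V) ∩ Fb) ((↑S : Set V) ∩ ↑T) :=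
          Set.disjoint_left.2 fun z h1 h2 => h1.2.1 h2.2
        have d2 : Disjoint ((↑S : Set V) ∩ Fb ∪ (↑S : Set V) ∩ ↑T) (Ab ∩ ↑T) := by
          refine Set.disjoint_left.2 fun z h1 h2 => ?_
          rcases h1 with h1 | h1 <;> exact h2.1.1 h1.1
        rw [Set.ncard_union_eq d2 (Set.toFinite _) (Set.toFinite _),
          Set.ncard_union_eq d1 (Set.toFinite _) (Set.toFinite _), hs3def, hs2def, hb2def]
      rw [← hYcard]
      refine cutLB _ (Ab ∩ Fb) ?_ ?_ x1 hx1 u ?_ ?_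
      · rintro p ⟨hpA, hpF⟩ ((h | h) | h)
        · exact hpA.1 h.1
        · exact hpA.1 h.1
        · exact hpF.1 h.2
      · intro p hp q hadj
        rcases hAbcl p hp.1 q hadj with h1 | h1 <;> rcases hFbcl p hp.2 q hadj with h2 | h2
        · exact Or.inl ⟨h1, h2⟩
        · exact Or.inr (Or.inr ⟨h1, h2⟩)
        · exact Or.inr (Or.inl (Or.inl ⟨h1, h2⟩))
        · exact Or.inr (Or.inl (Or.inr ⟨h1, h2⟩))
      · exact fun h => h.2.2 huF
      · rintro ((h | h) | h)
        · exact h.2.2 huF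
        · exact huT h.2
        · exact huT h.2
  -- degree bound: k + 2 ≤ 2 * m
  have ha0A : a0 ∈ A := by
    rw [hAeq]; exact mem_compOf_self (fun h => ha0S h)
  have hm1 : 1 ≤ m := by
    rw [hmdef]; exact (Set.ncard_pos (Set.toFinite _)).2 ⟨a0, ha0A⟩
  have hdegle : G.degree a0 ≤ (m - 1) + k := by
    have hsub : (G.neighborSet a0) ⊆ (A \ {a0}) ∪ ↑S := by
      intro q hq
      rcases hAcl a0 ha0A q hq with h | h
      · exact Or.inl ⟨h, fun he => G.loopless.irrefl a0 (by rw [Set.mem_singleton_iff] at he; exact he ▸ hq)⟩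
      · exact Or.inr h
    have h1 : (G.neighborSet a0).ncard ≤ ((A \ {a0}) ∪ ↑S).ncard :=
      Set.ncard_le_ncard hsub (Set.toFinite _)
    have h2 : ((A \ {a0}) ∪ ↑S).ncard ≤ (A \ {a0}).ncard + (↑S : Set V).ncard :=
      Set.ncard_union_le _ _
    have h3 : (A \ {a0}).ncard = m - 1 := by
      rw [Set.ncard_diff_singleton_of_mem ha0A, ← hmdef]
    have h4 : (↑S : Set V).ncard = k := by rw [Set.ncard_coe_finset, hScard']
    have h5' : G.degree a0 = (G.neighborSet a0).ncard := by
      rw [← SimpleGraph.card_neighborSet_eq_degree, Set.ncard_eq_toFinset_card',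
        Set.toFinset_card]
    omega
  have h2m : k + 2 ≤ 2 * m := by
    have hdegQ : (3 : ℚ) * t ≤ (G.degree a0 : ℚ) := by
      have h1 := hδ a0
      calc (3 : ℚ) * t ≤ ((⌈3 * t⌉ : ℤ) : ℚ) := Int.le_ceil _
        _ ≤ ((G.degree a0 : ℤ) : ℚ) := by exact_mod_cast h1
        _ = (G.degree a0 : ℚ) := by push_cast; ring
    have hcast : ((m - 1 + k : ℕ) : ℚ) = (m : ℚ) - 1 + (k : ℚ) := by
      rw [Nat.cast_add, Nat.cast_sub hm1, Nat.cast_one]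
    have hdl : (G.degree a0 : ℚ) ≤ (m : ℚ) - 1 + (k : ℚ) := by
      rw [← hcast]; exact_mod_cast hdegle
    have hq : (k : ℚ) + 2 ≤ 2 * (m : ℚ) := by
      rw [hk2t] at *
      linarith
    exact_mod_cast hq
  rcases h5 with h5 | h5 <;> rcases h6 with h6 | h6 <;> rcases h7 with h7 | h7 <;>
    rcases h8 with h8 | h8 <;> omega
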